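/- Let z ∈ ℂ and let {a_n}, {z_n} be an infinite continued fraction expansion and iteration sequence of z over the Eisenstein integers 𝔈 with respect to a nearest integer algorithm, with Q-pair {p_n}, {q_n}. Then for all n ≥ 1, |q_{n+1}| ≥ (3/2)·|q_{n−1}|. -/

import Mathlib

open Complex

/-- The primitive cube root of unity ω = (−1 + √3·i)/2. -/
noncomputable def eisOmega : ℂ := (-1 + Real.sqrt 3 * Complex.I) / 2

/-- `a : ℂ` is an Eisenstein integer: `a = x + y·ω` with `x, y ∈ ℤ`. -/
def IsEis (a : ℂ) : Prop := ∃ x y : ℤ, a = (x : ℂ) + (y : ℂ) * eisOmega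

lemma eis_re (x y : ℤ) : ((x:ℂ) + (y:ℂ)*eisOmega).re = (x:ℝ) - y/2 := by
  simp [eisOmega, Complex.add_re, Complex.mul_re]; ring

lemma eis_im (x y : ℤ) : ((x:ℂ) + (y:ℂ)*eisOmega).im = (y:ℝ) * (Real.sqrt 3/2) := by
  simp [eisOmega, Complex.add_im, Complex.mul_im]

lemma eis_normSq (x y : ℤ) :
    Complex.normSq ((x:ℂ) + (y:ℂ)*eisOmega) = ((x^2 - x*y + y^2 : ℤ) : ℝ) := by
  rw [Complex.normSq_apply, eis_re, eis_im]
  have h3 : Real.sqrt 3 ^ 2 = 3 := Real.sq_sqrt (by norm_num)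
  push_cast
  nlinarith [h3]

lemma key_cover (t f : ℝ) (ht0 : 0 ≤ t) (ht1 : t ≤ 1) (hf0 : 0 ≤ f) (hf1 : f ≤ 1) :
    f^2 + 3/4*t^2 ≤ 1/3 ∨ (1-f)^2 + 3/4*t^2 ≤ 1/3 ∨ (f-1/2)^2 + 3/4*(1-t)^2 ≤ 1/3 := by
  by_contra h
  push_neg at h
  obtain ⟨h1, h2, h3⟩ := h
  rcases le_or_gt f (1/2) with hc | hc
  · nlinarith [sq_nonneg (f - 1 + 3/2*t), sq_nonneg (3*t-2), sq_nonneg (3*t-1), mul_nonneg ht0 hf0]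
  · nlinarith [sq_nonneg (-f + 3/2*t), sq_nonneg (3*t-2), sq_nonneg (3*t-1),
      mul_nonneg ht0 (sub_nonneg.2 hf1)]

lemma exists_near (w : ℂ) : ∃ b : ℂ, IsEis b ∧ Complex.normSq (w - b) ≤ 1/3 := by
  have hr0 : (0:ℝ) < Real.sqrt 3 := by positivity
  have hr : Real.sqrt 3 ^ 2 = 3 := Real.sq_sqrt (by norm_num)
  set r := Real.sqrt 3 with hrdef
  set y0 : ℤ := ⌊2*w.im/r⌋ with hy0
  set t : ℝ := 2*w.im/r - y0 with htdef
  have ht0 : 0 ≤ t := by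
    have := Int.floor_le (2*w.im/r); simp only [htdef]; linarith
  have ht1 : t ≤ 1 := by
    have := Int.lt_floor_add_one (2*w.im/r); simp only [htdef]; linarith
  have him : w.im = ((y0:ℝ) + t) * (r/2) := by
    rw [htdef]; field_simp; ring
  set s : ℝ := w.re + y0/2 with hsdef
  set x0 : ℤ := ⌊s⌋ with hx0
  set f : ℝ := s - x0 with hfdef
  have hf0 : 0 ≤ f := by
    have := Int.floor_le s; simp only [hfdef]; linarith
  have hf1 : f ≤ 1 := by
    have := Int.lt_floor_add_one s; simp only [hfdef]; linarith
  have hre : w.re = (x0:ℝ) - y0/2 + f := by rw [hfdef, hsdef]; ring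
  have hd : ∀ x y : ℤ, Complex.normSq (w - ((x:ℂ) + (y:ℂ)*eisOmega)) =
      (w.re - ((x:ℝ) - y/2))^2 + (w.im - (y:ℝ)*(r/2))^2 := by
    intro x y
    rw [Complex.normSq_apply]
    rw [Complex.sub_re, Complex.sub_im, eis_re, eis_im]
    rw [hrdef]
    ring_nf
  rcases key_cover t f ht0 ht1 hf0 hf1 with h | h | h
  · refine ⟨(x0:ℂ) + (y0:ℂ)*eisOmega, ⟨x0, y0, rfl⟩, ?_⟩
    rw [hd]
    have e1 : w.re - ((x0:ℝ) - y0/2) = f := by rw [hre]; ring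
    have e2 : w.im - (y0:ℝ)*(r/2) = t*(r/2) := by rw [him]; ring
    rw [e1, e2]
    nlinarith [hr]
  · refine ⟨((x0+1:ℤ):ℂ) + (y0:ℂ)*eisOmega, ⟨x0+1, y0, rfl⟩, ?_⟩
    rw [hd]
    have e1 : w.re - (((x0+1:ℤ):ℝ) - y0/2) = -(1-f) := by push_cast; rw [hre]; ring
    have e2 : w.im - (y0:ℝ)*(r/2) = t*(r/2) := by rw [him]; ring
    rw [e1, e2]
    nlinarith [hr]
  · refine ⟨((x0+1:ℤ):ℂ) + ((y0+1:ℤ):ℂ)*eisOmega, ⟨x0+1, y0+1, rfl⟩, ?_⟩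
    rw [hd]
    have e1 : w.re - (((x0+1:ℤ):ℝ) - (y0+1:ℤ)/2) = f - 1/2 := by push_cast; rw [hre]; ring
    have e2 : w.im - ((y0+1:ℤ):ℝ)*(r/2) = -((1-t)*(r/2)) := by push_cast; rw [him]; ring
    rw [e1, e2]
    nlinarith [hr]

lemma zmod4_norm : ∀ u v : ZMod 4, u^2 - u*v + v^2 ≠ 2 := by decide

lemma eis_normSq_ge {b : ℂ} (hb : IsEis b) (h : 4/3 ≤ Complex.normSq b) :
    3 ≤ Complex.normSq b := by
  obtain ⟨x, y, rfl⟩ := hb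
  rw [eis_normSq] at h ⊢
  set N : ℤ := x^2 - x*y + y^2 with hN
  have h1 : (1:ℝ) < (N:ℝ) := by linarith
  have h2 : (2:ℤ) ≤ N := by exact_mod_cast (by exact_mod_cast h1 : (1:ℤ) < N)
  have h3 : N ≠ 2 := by
    intro hc
    have : ((x : ZMod 4)^2 - x*y + y^2) = 2 := by
      have := congrArg (fun z : ℤ => (z : ZMod 4)) hc
      push_cast at this
      exact_mod_cast this
    exact zmod4_norm x y this
  have : (3:ℤ) ≤ N := by omega
  exact_mod_cast this

/-- For all n ≥ 1, |q_{n+1}| ≥ (3/2)·|q_{n−1}|.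
(Here `q (n+1)` denotes qₙ, so q_{n+1} is `q (n+2)` and q_{n−1} is `q n`.) -/
theorem eisenstein_cf_ratio_growth
    (z : ℂ) (a zs : ℕ → ℂ)
    (ha : ∀ n, IsEis (a n))
    (hz0 : zs 0 = z)
    (hnear : ∀ n, ∀ b : ℂ, IsEis b → Norm.norm (zs n - a n) ≤ Norm.norm (zs n - b))
    (hne : ∀ n, zs n ≠ a n)
    (hit : ∀ n, zs (n + 1) = (zs n - a n)⁻¹)
    (p q : ℕ → ℂ)
    (hp0 : p 0 = 1) (hp1 : p 1 = a 0)
    (hprec : ∀ n, p (n + 2) = a (n + 1) * p (n + 1) + p n)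
    (hq0 : q 0 = 0) (hq1 : q 1 = 1)
    (hqrec : ∀ n, q (n + 2) = a (n + 1) * q (n + 1) + q n)
    (hqne : ∀ n, q (n + 1) ≠ 0)
    :
    ∀ n : ℕ, 1 ≤ n → (3 / 2) * Norm.norm (q n) ≤ Norm.norm (q (n + 2)) := by
  have hr0 : (0:ℝ) < Real.sqrt 3 := by positivity
  have hr : Real.sqrt 3 ^ 2 = 3 := Real.sq_sqrt (by norm_num)
  have hnz : ∀ n, zs n - a n ≠ 0 := fun n => sub_ne_zero.2 (hne n)
  have h13 : Real.sqrt (1/3) = Real.sqrt 3 / 3 := by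
    rw [show (1:ℝ)/3 = (Real.sqrt 3/3)^2 by rw [div_pow, hr]; norm_num]
    exact Real.sqrt_sq (by positivity)
  have hsmall : ∀ n, Norm.norm (zs n - a n) ≤ Real.sqrt 3 / 3 := by
    intro n
    obtain ⟨b, hb, hb2⟩ := exists_near (zs n)
    calc Norm.norm (zs n - a n) ≤ Norm.norm (zs n - b) := hnear n b hb
      _ = Real.sqrt (Complex.normSq (zs n - b)) := Complex.norm_def _
      _ ≤ Real.sqrt (1/3) := Real.sqrt_le_sqrt hb2
      _ = Real.sqrt 3 / 3 := h13
  have habs_pos : ∀ n, 0 < Norm.norm (zs n - a n) := fun n => norm_pos_iff.2 (hnz n)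
  have hzs : ∀ n, Real.sqrt 3 ≤ Norm.norm (zs (n+1)) := by
    intro n
    rw [hit n, norm_inv]
    have h1 : ((Real.sqrt 3 / 3)⁻¹ : ℝ) ≤ (Norm.norm (zs n - a n))⁻¹ :=
      inv_anti₀ (habs_pos n) (hsmall n)
    have h2 : ((Real.sqrt 3 / 3)⁻¹ : ℝ) = Real.sqrt 3 := by
      rw [inv_div, Real.div_sqrt]
    linarith
  have hzsne : ∀ n, zs (n+1) ≠ 0 := by
    intro n hc
    have := hzs n
    rw [hc, norm_zero] at this
    linarith
  have hzs_abs_pos : ∀ n, 0 < Norm.norm (zs (n+1)) := fun n => lt_of_lt_of_le hr0 (hzs n)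
  have hmul : ∀ n, zs (n+1) * (zs n - a n) = 1 := by
    intro n; rw [hit n]; exact inv_mul_cancel₀ (hnz n)
  have hinv : ∀ n, (zs (n+1))⁻¹ = zs n - a n := by
    intro n; rw [hit n, inv_inv]
  have ha2 : ∀ n, Real.sqrt 3 ≤ Norm.norm (a (n+1)) := by
    intro n
    have h1 : Norm.norm (zs (n+1)) - Norm.norm (zs (n+1) - a (n+1)) ≤
        Norm.norm (a (n+1)) := by
      have := norm_add_le (zs (n+1) - a (n+1)) (a (n+1))
      simp only [sub_add_cancel] at this
      linarith
    have h2 : 2 * Real.sqrt 3 / 3 ≤ Norm.norm (a (n+1)) := by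
      have := hzs n
      have := hsmall (n+1)
      linarith
    have h3 : 4/3 ≤ Complex.normSq (a (n+1)) := by
      rw [← Complex.sq_norm]
      nlinarith [norm_nonneg (a (n+1))]
    have h4 := eis_normSq_ge (ha (n+1)) h3
    rw [Complex.norm_def]
    calc Real.sqrt 3 ≤ Real.sqrt (Complex.normSq (a (n+1))) := Real.sqrt_le_sqrt h4
      _ = _ := rfl
  set D : ℕ → ℂ := fun n => q (n+1) * zs (n+1) + q n with hDdef
  have hD : ∀ n, D (n+1) = zs (n+2) * D n := by
    intro n
    show q (n+2) * zs (n+2) + q (n+1) = zs (n+2) * (q (n+1) * zs (n+1) + q n)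
    rw [hqrec n]
    linear_combination (- q (n+1)) * hmul (n+1)
  have hDnn : ∀ n, 0 ≤ Norm.norm (D n) := fun n => norm_nonneg _
  have hDstep : ∀ n, Real.sqrt 3 * Norm.norm (D n) ≤ Norm.norm (D (n+1)) := by
    intro n
    rw [hD n, norm_mul]
    exact mul_le_mul_of_nonneg_right (hzs (n+1)) (hDnn n)
  have hqid : ∀ n, q (n+2) = D n - q (n+1) * (zs (n+2))⁻¹ := by
    intro n
    show q (n+2) = q (n+1) * zs (n+1) + q n - q (n+1) * (zs (n+2))⁻¹
    rw [hqrec n, hinv (n+1)]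
    ring
  have hkey : ∀ n, q (n+3) = a (n+2) * D n + q (n+1) * ((zs (n+2))⁻¹ * (zs (n+3))⁻¹) := by
    intro n
    rw [hqrec (n+1), hqid n, hinv (n+1), hinv (n+2)]
    linear_combination (-(q (n+1))) * hmul (n+1)
  have hup : ∀ n, Norm.norm (q (n+1)) ≤ Real.sqrt 3 / 2 * Norm.norm (D n) := by
    intro n
    induction n with
    | zero =>
      have hD0 : D 0 = zs 1 := by
        show q 1 * zs 1 + q 0 = zs 1
        rw [hq0, hq1]; ring
      rw [hq1, hD0, norm_one]
      nlinarith [hzs 0, hr, hr0]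
    | succ n ih =>
      have h1 : Norm.norm (q (n+2)) ≤ Norm.norm (D n) +
          Norm.norm (q (n+1)) * (Norm.norm (zs (n+2)))⁻¹ := by
        rw [hqid n, sub_eq_add_neg]
        calc Norm.norm (D n + -(q (n+1) * (zs (n+2))⁻¹))
            ≤ Norm.norm (D n) + Norm.norm (-(q (n+1) * (zs (n+2))⁻¹)) :=
              norm_add_le _ _
          _ = Norm.norm (D n) + Norm.norm (q (n+1)) * (Norm.norm (zs (n+2)))⁻¹ := by
              rw [norm_neg, norm_mul, norm_inv]
      have h2 : (Norm.norm (zs (n+2)))⁻¹ ≤ (Real.sqrt 3)⁻¹ :=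
        inv_anti₀ hr0 (hzs (n+1))
      have h3 : Norm.norm (q (n+1)) * (Norm.norm (zs (n+2)))⁻¹ ≤
          Real.sqrt 3 / 2 * Norm.norm (D n) * (Real.sqrt 3)⁻¹ := by
        apply mul_le_mul ih h2 (by positivity) (by positivity)
      have h4 : Real.sqrt 3 / 2 * Norm.norm (D n) * (Real.sqrt 3)⁻¹ =
          1/2 * Norm.norm (D n) := by
        field_simp
      have h5 := hDstep n
      have h6 : Norm.norm (q (n+2)) ≤ 3/2 * Norm.norm (D n) := by
        rw [h4] at h3; linarith
      nlinarith [hDnn n, hDnn (n+1), hr0]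
  intro n hn
  obtain ⟨m, rfl⟩ : ∃ m, n = m + 1 := ⟨n - 1, by omega⟩
  -- goal : 3/2 * abs (q (m+1)) ≤ abs (q (m+3))
  have hlow : Real.sqrt 3 * Norm.norm (D m) - Norm.norm (q (m+1)) * (1/3) ≤
      Norm.norm (q (m+3)) := by
    have h1 : Norm.norm (a (m+2) * D m) -
        Norm.norm (q (m+1) * ((zs (m+2))⁻¹ * (zs (m+3))⁻¹)) ≤ Norm.norm (q (m+3)) := by
      have := norm_add_le (a (m+2) * D m) (q (m+1) * ((zs (m+2))⁻¹ * (zs (m+3))⁻¹))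
      rw [← hkey m] at this
      have h2 := norm_add_le (q (m+3))
        (- (q (m+1) * ((zs (m+2))⁻¹ * (zs (m+3))⁻¹)))
      rw [norm_neg] at h2
      have h3 : q (m+3) + - (q (m+1) * ((zs (m+2))⁻¹ * (zs (m+3))⁻¹)) = a (m+2) * D m := by
        rw [hkey m]; ring
      rw [h3] at h2
      linarith
    have h4 : Real.sqrt 3 * Norm.norm (D m) ≤ Norm.norm (a (m+2) * D m) := by
      rw [norm_mul]
      exact mul_le_mul_of_nonneg_right (ha2 (m+1)) (hDnn m)
    have h5 : Norm.norm (q (m+1) * ((zs (m+2))⁻¹ * (zs (m+3))⁻¹)) ≤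
        Norm.norm (q (m+1)) * (1/3) := by
      rw [norm_mul, norm_mul, norm_inv, norm_inv]
      have ha1 : (Norm.norm (zs (m+2)))⁻¹ ≤ (Real.sqrt 3)⁻¹ :=
        inv_anti₀ hr0 (hzs (m+1))
      have hb1 : (Norm.norm (zs (m+3)))⁻¹ ≤ (Real.sqrt 3)⁻¹ :=
        inv_anti₀ hr0 (hzs (m+2))
      have hc1 : (Norm.norm (zs (m+2)))⁻¹ * (Norm.norm (zs (m+3)))⁻¹ ≤
          (Real.sqrt 3)⁻¹ * (Real.sqrt 3)⁻¹ := by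
        apply mul_le_mul ha1 hb1 (by positivity) (by positivity)
      have hd1 : (Real.sqrt 3)⁻¹ * (Real.sqrt 3)⁻¹ = 1/3 := by
        rw [← mul_inv, Real.mul_self_sqrt (by norm_num : (0:ℝ) ≤ 3)]
        norm_num
      rw [hd1] at hc1
      exact mul_le_mul_of_nonneg_left hc1 (norm_nonneg _)
    linarith
  have hup1 := hup m
  nlinarith [hDnn m, norm_nonneg (q (m+1)), hr0, hr,
    mul_le_mul_of_nonneg_left hup1 (le_of_lt hr0)]
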